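/- Let K be a differential field of characteristic zero and let K⟨x⟩ denote the fraction field of the differential polynomial ring K{x} in one differential indeterminate x, equipped with the extended derivation. Then the field of constants of K⟨x⟩ equals the field of constants of K. -/

import Mathlib

set_option maxHeartbeats 1000000
set_option synthInstance.maxHeartbeats 200000

open MvPolynomial

namespace Aux17

variable {K : Type*} [Field K] [CharZero K]

set_option linter.unusedSectionVars false

/-- The shift derivation sending `X n` to `X (n+1)`. -/
noncomputable def derivP : Derivation K (MvPolynomial ℕ K) (MvPolynomial ℕ K) :=
  MvPolynomial.mkDerivation K (fun n => MvPolynomial.X (n + 1))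

@[simp] lemma derivP_X (n : ℕ) : (derivP (K := K)) (X n) = X (n + 1) :=
  mkDerivation_X _ _ _

/-- Coefficientwise application of `δ`. -/
noncomputable def Dd (δ : K → K) (p : MvPolynomial ℕ K) : MvPolynomial ℕ K :=
  (AddMonoidAlgebra.coeff p).sum fun s a => monomial s (δ a)

lemma coeff_Dd (δ : K → K) (hδ0 : δ 0 = 0) (p : MvPolynomial ℕ K) (d : ℕ →₀ ℕ) :
    coeff d (Dd δ p) = δ (coeff d p) := by
  classical
  rw [Dd, Finsupp.sum, MvPolynomial.coeff_sum]
  simp only [MvPolynomial.coeff_monomial]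
  rw [Finset.sum_ite_eq']
  split_ifs with h
  · rfl
  · rw [show coeff d p = 0 from MvPolynomial.notMem_support_iff.mp h, hδ0]

lemma Dd_add (δ : K → K) (hδ0 : δ 0 = 0) (hδadd : ∀ x y, δ (x + y) = δ x + δ y)
    (p q : MvPolynomial ℕ K) : Dd δ (p + q) = Dd δ p + Dd δ q := by
  ext d
  simp [coeff_Dd δ hδ0, hδadd]

lemma Dd_mul (δ : K → K) (hδ0 : δ 0 = 0) (hδadd : ∀ x y, δ (x + y) = δ x + δ y)
    (hδmul : ∀ x y, δ (x * y) = x * δ y + y * δ x)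
    (p q : MvPolynomial ℕ K) : Dd δ (p * q) = p * Dd δ q + q * Dd δ p := by
  classical
  have hsum : ∀ (s : Finset ((ℕ →₀ ℕ) × (ℕ →₀ ℕ))) (f : ((ℕ →₀ ℕ) × (ℕ →₀ ℕ)) → K),
      δ (∑ x ∈ s, f x) = ∑ x ∈ s, δ (f x) := by
    intro s f
    exact map_sum (AddMonoidHom.mk' δ (fun a b => hδadd a b)) f s
  ext d
  rw [MvPolynomial.coeff_add, coeff_Dd δ hδ0, MvPolynomial.coeff_mul, hsum]
  have h1 : ∀ x ∈ Finset.HasAntidiagonal.antidiagonal d, δ (coeff x.1 p * coeff x.2 q)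
      = coeff x.1 p * δ (coeff x.2 q) + coeff x.2 q * δ (coeff x.1 p) :=
    fun x _ => hδmul _ _
  rw [Finset.sum_congr rfl h1, Finset.sum_add_distrib]
  congr 1
  · rw [MvPolynomial.coeff_mul]
    exact Finset.sum_congr rfl fun x _ => by rw [coeff_Dd δ hδ0]
  · rw [MvPolynomial.coeff_mul,
      Finsupp.sum_antidiagonal_swap d (fun a b => coeff b q * δ (coeff a p))]
    exact Finset.sum_congr rfl fun x _ => by rw [coeff_Dd δ hδ0]

lemma Dd_C (δ : K → K) (hδ0 : δ 0 = 0) (a : K) : Dd δ (C a : MvPolynomial ℕ K) = C (δ a) := by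
  classical
  ext d
  simp [coeff_Dd δ hδ0, MvPolynomial.coeff_C, apply_ite δ, hδ0]

lemma Dd_X (δ : K → K) (hδ0 : δ 0 = 0) (hδ1 : δ 1 = 0) (n : ℕ) :
    Dd δ (X n : MvPolynomial ℕ K) = 0 := by
  classical
  ext d
  rw [coeff_Dd δ hδ0, MvPolynomial.coeff_X', apply_ite δ, hδ0, hδ1]
  simp

lemma support_Dd (δ : K → K) (hδ0 : δ 0 = 0) (p : MvPolynomial ℕ K) :
    (Dd δ p).support ⊆ p.support := by
  intro d hd
  rw [MvPolynomial.mem_support_iff] at hd ⊢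
  intro h
  rw [coeff_Dd δ hδ0, h, hδ0] at hd
  exact hd rfl

lemma vars_Dd (δ : K → K) (hδ0 : δ 0 = 0) (p : MvPolynomial ℕ K) :
    (Dd δ p).vars ⊆ p.vars := by
  intro i hi
  rw [MvPolynomial.mem_vars] at hi ⊢
  obtain ⟨d, hd, hid⟩ := hi
  exact ⟨d, support_Dd δ hδ0 p hd, hid⟩

/-- The full derivation on the differential polynomial ring. -/
noncomputable def Dfull (δ : K → K) (p : MvPolynomial ℕ K) : MvPolynomial ℕ K :=
  Dd δ p + derivP p

lemma Dfull_C (δ : K → K) (hδ0 : δ 0 = 0) (a : K) :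
    Dfull δ (C a : MvPolynomial ℕ K) = C (δ a) := by
  rw [Dfull, Dd_C δ hδ0]
  have : (C a : MvPolynomial ℕ K) = algebraMap K (MvPolynomial ℕ K) a := rfl
  rw [this, Derivation.map_algebraMap, add_zero]

lemma Dfull_add (δ : K → K) (hδ0 : δ 0 = 0) (hδadd : ∀ x y, δ (x + y) = δ x + δ y)
    (p q : MvPolynomial ℕ K) : Dfull δ (p + q) = Dfull δ p + Dfull δ q := by
  rw [Dfull, Dfull, Dfull, Dd_add δ hδ0 hδadd, map_add]
  ring

lemma Dfull_mul (δ : K → K) (hδ0 : δ 0 = 0) (hδadd : ∀ x y, δ (x + y) = δ x + δ y)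
    (hδmul : ∀ x y, δ (x * y) = x * δ y + y * δ x)
    (p q : MvPolynomial ℕ K) : Dfull δ (p * q) = p * Dfull δ q + q * Dfull δ p := by
  rw [Dfull, Dfull, Dfull, Dd_mul δ hδ0 hδadd hδmul, Derivation.leibniz, smul_eq_mul, smul_eq_mul]
  ring

/-- Commutator identity: `[∂_{N+1}, derivP] = ∂_N`. -/
lemma pderiv_derivP (N : ℕ) (f : MvPolynomial ℕ K) :
    pderiv (N + 1) (derivP f) = pderiv N f + derivP (pderiv (N + 1) f) := by
  classical
  have h : (⁅(pderiv (N + 1) : Derivation K (MvPolynomial ℕ K) (MvPolynomial ℕ K)), derivP⁆ :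
      Derivation K (MvPolynomial ℕ K) (MvPolynomial ℕ K)) = pderiv N := by
    apply MvPolynomial.derivation_ext
    intro i
    rw [Derivation.commutator_apply, derivP_X]
    by_cases hiN : i = N
    · subst hiN
      rw [pderiv_X_self, pderiv_X_self]
      simp
    · rw [pderiv_X_of_ne (show i + 1 ≠ N + 1 by omega),
        pderiv_X_of_ne (show i ≠ N from hiN)]
      by_cases hi2 : i = N + 1
      · subst hi2
        rw [pderiv_X_self]
        simp
      · rw [pderiv_X_of_ne hi2]
        simp
  have := congrArg (fun (D : Derivation K (MvPolynomial ℕ K) (MvPolynomial ℕ K)) => D f) h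
  simp only [Derivation.commutator_apply] at this
  linear_combination (norm := abel) this


/-- An equiv `ℕ ≃ Option ℕ` sending `N` to `none`. -/
def e0 : ℕ ≃ Option ℕ where
  toFun n := match n with
    | 0 => none
    | Nat.succ m => some m
  invFun o := o.elim 0 Nat.succ
  left_inv n := by cases n <;> rfl
  right_inv o := by cases o <;> rfl

def eN (N : ℕ) : ℕ ≃ Option ℕ := (Equiv.swap N 0).trans e0

lemma eN_self (N : ℕ) : eN N N = none := by
  simp [eN, e0, Equiv.swap_apply_left]

/-- View `MvPolynomial ℕ K` as polynomials in `X N` over the remaining variables. -/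
noncomputable def Psi (N : ℕ) : MvPolynomial ℕ K ≃ₐ[K] Polynomial (MvPolynomial ℕ K) :=
  (renameEquiv K (eN N)).trans (optionEquivLeft K ℕ)

/-- `d/dX N` transferred through `Psi N`, as a derivation. -/
noncomputable def D2 (N : ℕ) : Derivation K (MvPolynomial ℕ K) (MvPolynomial ℕ K) where
  toLinearMap := (Psi N).symm.toLinearMap.comp
    ((Polynomial.derivative.restrictScalars K).comp (Psi (K := K) N).toLinearMap)
  map_one_eq_zero' := by simp
  leibniz' a b := by
    simp only [LinearMap.comp_apply, AlgEquiv.toLinearMap_apply, LinearMap.coe_restrictScalars,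
      map_mul, Polynomial.derivative_mul, map_add, smul_eq_mul, AlgEquiv.symm_apply_apply]
    ring

lemma D2_apply (N : ℕ) (f : MvPolynomial ℕ K) :
    D2 N f = (Psi N).symm (Polynomial.derivative (Psi N f)) := rfl

lemma Psi_X (N i : ℕ) : Psi (K := K) N (X i) = (optionEquivLeft K ℕ) (X (eN N i)) := by
  simp [Psi, renameEquiv_apply, rename_X]

lemma pderiv_eq_D2 (N : ℕ) :
    (pderiv N : Derivation K (MvPolynomial ℕ K) (MvPolynomial ℕ K)) = D2 N := by
  apply MvPolynomial.derivation_ext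
  intro i
  by_cases hiN : i = N
  · subst hiN
    rw [pderiv_X_self, D2_apply, Psi_X, eN_self, optionEquivLeft_X_none,
      Polynomial.derivative_X, map_one]
  · obtain ⟨j, hj⟩ : ∃ j, eN N i = some j := by
      cases h : eN N i with
      | none => exact absurd ((eN N).injective (h.trans (eN_self N).symm)) hiN
      | some j => exact ⟨j, rfl⟩
    rw [pderiv_X_of_ne (show i ≠ N from hiN), D2_apply, Psi_X, hj, optionEquivLeft_X_some,
      Polynomial.derivative_C, map_zero]

lemma Psi_pderiv (N : ℕ) (f : MvPolynomial ℕ K) :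
    Psi N (pderiv N f) = Polynomial.derivative (Psi N f) := by
  have h := congrArg
    (fun D : Derivation K (MvPolynomial ℕ K) (MvPolynomial ℕ K) => D f) (pderiv_eq_D2 N)
  simp only [D2_apply] at h
  rw [h, AlgEquiv.apply_symm_apply]

lemma optionEquivLeft_rename_some (r : MvPolynomial ℕ K) :
    (optionEquivLeft K ℕ) (rename some r) = Polynomial.C r := by
  induction r using MvPolynomial.induction_on with
  | C a => rw [rename_C, optionEquivLeft_C]
  | add p q ihp ihq => rw [map_add, map_add, ihp, ihq, map_add]
  | mul_X p n ih => rw [map_mul, map_mul, ih, rename_X, optionEquivLeft_X_some, map_mul]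

lemma pderiv_zero_of_dvd (N : ℕ) (q : MvPolynomial ℕ K) (hq : q ≠ 0)
    (hdvd : q ∣ pderiv N q) : pderiv N q = 0 ∧ N ∉ q.vars := by
  classical
  have h1 : Psi N q ∣ Polynomial.derivative (Psi N q) := by
    rw [← Psi_pderiv]
    exact map_dvd (Psi N) hdvd
  have hzero : Polynomial.derivative (Psi N q) = 0 := by
    by_contra h0
    have hle := Polynomial.natDegree_le_of_dvd h1 h0
    rcases Nat.eq_zero_or_pos (Psi N q).natDegree with h | h
    · exact h0 (by rw [Polynomial.eq_C_of_natDegree_eq_zero h, Polynomial.derivative_C])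
    · exact absurd hle (not_le.mpr (Polynomial.natDegree_derivative_lt (Nat.pos_iff_ne_zero.mp h)))
  have hpd : pderiv N q = 0 := by
    have := Psi_pderiv N q
    rw [hzero] at this
    exact (Psi N).injective (by rw [this, map_zero])
  refine ⟨hpd, ?_⟩
  have hdeg : (Psi N q).natDegree = 0 := Polynomial.natDegree_eq_zero_of_derivative_eq_zero hzero
  have hC : Psi N q = Polynomial.C ((Psi N q).coeff 0) := Polynomial.eq_C_of_natDegree_eq_zero hdeg
  set r := (Psi N q).coeff 0
  have hcomp : (⇑(eN N)) ∘ ((eN N).symm ∘ some) = some := by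
    funext o
    simp [Function.comp]
  have hPP : Psi N (rename ((eN N).symm ∘ some) r) = Psi N q := by
    rw [hC]
    calc Psi N (rename ((eN N).symm ∘ some) r)
        = optionEquivLeft K ℕ (rename (eN N) (rename ((eN N).symm ∘ some) r)) := by
          simp [Psi]
      _ = optionEquivLeft K ℕ (rename some r) := by rw [rename_rename, hcomp]
      _ = Polynomial.C r := optionEquivLeft_rename_some r
  have hqr : q = rename ((eN N).symm ∘ some) r := ((Psi N).injective hPP).symm
  rw [hqr]
  intro hN
  obtain ⟨j, -, hj⟩ := Finset.mem_image.mp (vars_rename _ r hN)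
  have h2 : (eN N) ((eN N).symm (some j)) = eN N N := congrArg (eN N) hj
  rw [Equiv.apply_symm_apply, eN_self] at h2
  exact Option.some_ne_none j h2


lemma Dfull_X (δ : K → K) (hδ0 : δ 0 = 0) (hδ1 : δ 1 = 0) (n : ℕ) :
    Dfull δ (X n : MvPolynomial ℕ K) = X (n + 1) := by
  rw [Dfull, Dd_X δ hδ0 hδ1, derivP_X, zero_add]

lemma eq_C_of_vars_empty (p : MvPolynomial ℕ K) (h : p.vars = ∅) : p = C (coeff 0 p) := by
  classical
  ext d
  by_cases hd : d = 0
  · subst hd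
    simp [MvPolynomial.coeff_C]
  · rw [MvPolynomial.coeff_C, if_neg (fun hh => hd hh.symm)]
    by_contra hne
    obtain ⟨i, hi⟩ : ∃ i, d i ≠ 0 := by
      by_contra h0
      push_neg at h0
      exact hd (Finsupp.ext h0)
    have hmem : i ∈ p.vars := (mem_vars i).mpr
      ⟨d, MvPolynomial.mem_support_iff.mpr hne, Finsupp.mem_support_iff.mpr hi⟩
    rw [h] at hmem
    exact absurd hmem (Finset.notMem_empty i)

lemma deltaF_algebraMap (δ : K → K) (hδ0 : δ 0 = 0) (hδ1 : δ 1 = 0)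
    (hδadd : ∀ x y, δ (x + y) = δ x + δ y)
    (hδmul : ∀ x y, δ (x * y) = x * δ y + y * δ x)
    (δF : FractionRing (MvPolynomial ℕ K) → FractionRing (MvPolynomial ℕ K))
    (hFadd : ∀ x y, δF (x + y) = δF x + δF y)
    (hFmul : ∀ x y, δF (x * y) = x * δF y + y * δF x)
    (hFC : ∀ a : K, δF (algebraMap (MvPolynomial ℕ K) (FractionRing (MvPolynomial ℕ K)) (C a))
      = algebraMap (MvPolynomial ℕ K) (FractionRing (MvPolynomial ℕ K)) (C (δ a)))
    (hFX : ∀ n : ℕ, δF (algebraMap (MvPolynomial ℕ K) (FractionRing (MvPolynomial ℕ K)) (X n))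
      = algebraMap (MvPolynomial ℕ K) (FractionRing (MvPolynomial ℕ K)) (X (n + 1)))
    (r : MvPolynomial ℕ K) :
    δF (algebraMap (MvPolynomial ℕ K) (FractionRing (MvPolynomial ℕ K)) r)
      = algebraMap (MvPolynomial ℕ K) (FractionRing (MvPolynomial ℕ K)) (Dfull δ r) := by
  induction r using MvPolynomial.induction_on with
  | C a => rw [hFC, Dfull_C δ hδ0]
  | add p q ihp ihq =>
    rw [RingHom.map_add, hFadd, ihp, ihq, Dfull_add δ hδ0 hδadd, RingHom.map_add]
  | mul_X p n ih =>
    rw [RingHom.map_mul, hFmul, hFX, ih, Dfull_mul δ hδ0 hδadd hδmul, Dfull_X δ hδ0 hδ1,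
      RingHom.map_add, RingHom.map_mul, RingHom.map_mul]

end Aux17

open Aux17 in
/-- Let `K` be a differential field of characteristic zero and let `K⟨x⟩`
be the fraction field of the differential polynomial ring `K{x}` (modelled as
`FractionRing (MvPolynomial ℕ K)`, where the variable `n` stands for `x^(n)`), equipped
with the derivation `δF` extending that of `K` and sending `x^(n)` to `x^(n+1)`. Then the
field of constants of `K⟨x⟩` equals the field of constants of `K`: every constant of
`K⟨x⟩` comes from a constant of `K`, and every constant of `K` is a constant of `K⟨x⟩`. -/
theorem constants_of_differential_rational_functions
    {K : Type*} [Field K] [CharZero K]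
    (δ : K → K)
    (hδadd : ∀ x y, δ (x + y) = δ x + δ y)
    (hδmul : ∀ x y, δ (x * y) = x * δ y + y * δ x)
    (δF : FractionRing (MvPolynomial ℕ K) → FractionRing (MvPolynomial ℕ K))
    (hFadd : ∀ x y, δF (x + y) = δF x + δF y)
    (hFmul : ∀ x y, δF (x * y) = x * δF y + y * δF x)
    (hFC : ∀ a : K, δF (algebraMap (MvPolynomial ℕ K) (FractionRing (MvPolynomial ℕ K)) (C a))
      = algebraMap (MvPolynomial ℕ K) (FractionRing (MvPolynomial ℕ K)) (C (δ a)))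
    (hFX : ∀ n : ℕ, δF (algebraMap (MvPolynomial ℕ K) (FractionRing (MvPolynomial ℕ K)) (X n))
      = algebraMap (MvPolynomial ℕ K) (FractionRing (MvPolynomial ℕ K)) (X (n + 1))) :
    ∀ z : FractionRing (MvPolynomial ℕ K), δF z = 0 →
      ∃ c : K, δ c = 0 ∧
        algebraMap (MvPolynomial ℕ K) (FractionRing (MvPolynomial ℕ K)) (C c) = z := by
  classical
  intro z hz
  have hδ0 : δ 0 = 0 := by
    have := hδadd 0 0
    simpa using this.symm
  have hδ1 : δ 1 = 0 := by
    have := hδmul 1 1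
    simp only [mul_one, one_mul] at this
    linear_combination -this
  by_cases hz0 : z = 0
  · exact ⟨0, hδ0, by simp [hz0]⟩
  obtain ⟨p1, q1, hq1mem, hzeq⟩ := IsFractionRing.div_surjective (A := MvPolynomial ℕ K) z
  have hq1 : q1 ≠ 0 := mem_nonZeroDivisors_iff_ne_zero.mp hq1mem
  have hp1 : p1 ≠ 0 := by
    intro h
    rw [h, map_zero, zero_div] at hzeq
    exact hz0 hzeq.symm
  obtain ⟨p, q, c, hrel, hcp, hcq⟩ := UniqueFactorizationMonoid.exists_reduced_factors' p1 q1 hq1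
  have hcne : c ≠ 0 := fun h => hq1 (by rw [← hcq, h, zero_mul])
  have hqne : q ≠ 0 := fun h => hq1 (by rw [← hcq, h, mul_zero])
  have hpne : p ≠ 0 := fun h => hp1 (by rw [← hcp, h, mul_zero])
  have hinj : Function.Injective
      (algebraMap (MvPolynomial ℕ K) (FractionRing (MvPolynomial ℕ K))) :=
    IsFractionRing.injective _ _
  have hmapne : ∀ r : MvPolynomial ℕ K, r ≠ 0 →
      algebraMap (MvPolynomial ℕ K) (FractionRing (MvPolynomial ℕ K)) r ≠ 0 := by
    intro r hr h
    exact hr (hinj (by rw [h, map_zero]))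
  have hzpq : z = algebraMap (MvPolynomial ℕ K) (FractionRing (MvPolynomial ℕ K)) p
      / algebraMap (MvPolynomial ℕ K) (FractionRing (MvPolynomial ℕ K)) q := by
    rw [← hzeq, ← hcp, ← hcq, map_mul, map_mul,
      mul_div_mul_left _ _ (hmapne c hcne)]
  have hE0 : z * algebraMap (MvPolynomial ℕ K) (FractionRing (MvPolynomial ℕ K)) q
      = algebraMap (MvPolynomial ℕ K) (FractionRing (MvPolynomial ℕ K)) p := by
    rw [hzpq, div_mul_cancel₀ _ (hmapne q hqne)]
  have hhom := deltaF_algebraMap δ hδ0 hδ1 hδadd hδmul δF hFadd hFmul hFC hFX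
  have hE1 : algebraMap (MvPolynomial ℕ K) (FractionRing (MvPolynomial ℕ K)) (Dfull δ p)
      = z * algebraMap (MvPolynomial ℕ K) (FractionRing (MvPolynomial ℕ K)) (Dfull δ q) := by
    have h6 := congrArg δF hE0
    rw [hFmul, hz, mul_zero, add_zero, hhom, hhom] at h6
    exact h6.symm
  have hE2 : Dfull δ p * q = p * Dfull δ q := by
    apply hinj
    rw [map_mul, map_mul, hE1, ← hE0]
    ring
  by_cases hvars : (p.vars ∪ q.vars : Finset ℕ) = ∅
  · rw [Finset.union_eq_empty] at hvars
    have hpa : p = C (coeff 0 p) := eq_C_of_vars_empty p hvars.1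
    have hqb : q = C (coeff 0 q) := eq_C_of_vars_empty q hvars.2
    set a := coeff 0 p with ha
    set b := coeff 0 q with hbdef
    have hb : b ≠ 0 := fun h => hqne (by rw [hqb, h, map_zero])
    have hab : δ a * b = a * δ b := by
      have h7 := hE2
      rw [hpa, hqb, Dfull_C δ hδ0, Dfull_C δ hδ0, ← map_mul, ← map_mul] at h7
      exact MvPolynomial.C_injective ℕ K h7
    have e2 := hδmul b b⁻¹
    rw [mul_inv_cancel₀ hb, hδ1] at e2
    have e3 : b * b * δ b⁻¹ + δ b = 0 := by
      have h4 : b * (b * δ b⁻¹ + b⁻¹ * δ b) = 0 := by rw [← e2, mul_zero]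
      rw [mul_add, ← mul_assoc, ← mul_assoc, mul_inv_cancel₀ hb, one_mul] at h4
      exact h4
    refine ⟨a * b⁻¹, ?_, ?_⟩
    · have hbb : (b * b : K) ≠ 0 := mul_ne_zero hb hb
      have hsuff : (b * b) * δ (a * b⁻¹) = 0 := by
        rw [hδmul]
        calc (b * b) * (a * δ b⁻¹ + b⁻¹ * δ a)
            = a * (b * b * δ b⁻¹) + (b * b⁻¹) * (b * δ a) := by ring
          _ = a * (- δ b) + 1 * (b * δ a) := by
              rw [mul_inv_cancel₀ hb]
              have he : b * b * δ b⁻¹ = - δ b := by linear_combination e3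
              rw [he]
          _ = b * δ a - a * δ b := by ring
          _ = 0 := by linear_combination hab
      rcases mul_eq_zero.mp hsuff with h | h
      · exact absurd h hbb
      · exact h
    · have hcb : (a * b⁻¹) * b = a := by
        field_simp
      have hCC : (C (a * b⁻¹) * C b : MvPolynomial ℕ K) = C a := by
        rw [← C_mul, hcb]
      have : algebraMap (MvPolynomial ℕ K) (FractionRing (MvPolynomial ℕ K)) (C (a * b⁻¹))
          * algebraMap (MvPolynomial ℕ K) (FractionRing (MvPolynomial ℕ K)) q
          = z * algebraMap (MvPolynomial ℕ K) (FractionRing (MvPolynomial ℕ K)) q := by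
        rw [hE0, hpa, hqb, ← RingHom.map_mul, hCC]
      exact mul_right_cancel₀ (hmapne q hqne) this
  · have hS : (p.vars ∪ q.vars : Finset ℕ).Nonempty := Finset.nonempty_of_ne_empty hvars
    set N := (p.vars ∪ q.vars : Finset ℕ).max' hS with hNdef
    have hboundp : ∀ i ∈ p.vars, i ≤ N :=
      fun i hi => Finset.le_max' _ i (Finset.mem_union_left _ hi)
    have hboundq : ∀ i ∈ q.vars, i ≤ N :=
      fun i hi => Finset.le_max' _ i (Finset.mem_union_right _ hi)
    have hpN1 : pderiv (N + 1) p = 0 :=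
      pderiv_eq_zero_of_notMem_vars (fun h => by have := hboundp _ h; omega)
    have hqN1 : pderiv (N + 1) q = 0 :=
      pderiv_eq_zero_of_notMem_vars (fun h => by have := hboundq _ h; omega)
    have hDp : pderiv (N + 1) (Dfull δ p) = pderiv N p := by
      rw [Dfull, map_add, pderiv_derivP, hpN1, map_zero, add_zero,
        pderiv_eq_zero_of_notMem_vars
          (show N + 1 ∉ (Dd δ p).vars from fun h => by
            have := hboundp _ (vars_Dd δ hδ0 p h); omega),
        zero_add]
    have hDq : pderiv (N + 1) (Dfull δ q) = pderiv N q := by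
      rw [Dfull, map_add, pderiv_derivP, hqN1, map_zero, add_zero,
        pderiv_eq_zero_of_notMem_vars
          (show N + 1 ∉ (Dd δ q).vars from fun h => by
            have := hboundq _ (vars_Dd δ hδ0 q h); omega),
        zero_add]
    have hE' : pderiv N p * q = p * pderiv N q := by
      have h5 := congrArg (fun t => pderiv (N + 1) t) hE2
      simp only [pderiv_mul, hDp, hDq, hpN1, hqN1, mul_zero, add_zero, zero_mul, zero_add] at h5
      exact h5
    have hdq : q ∣ pderiv N q := by
      apply IsRelPrime.dvd_of_dvd_mul_left hrel.symm
      rw [← hE']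
      exact dvd_mul_left q (pderiv N p)
    have hdp : p ∣ pderiv N p := by
      apply IsRelPrime.dvd_of_dvd_mul_left hrel
      rw [mul_comm q (pderiv N p), hE']
      exact dvd_mul_right p (pderiv N q)
    obtain ⟨-, hnp⟩ := pderiv_zero_of_dvd N p hpne hdp
    obtain ⟨-, hnq⟩ := pderiv_zero_of_dvd N q hqne hdq
    rcases Finset.mem_union.mp (Finset.max'_mem _ hS) with h | h
    · exact absurd h hnp
    · exact absurd h hnq
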